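/- arXiv:2511.15460 — 2 statements merged into one kernel-verified Lean document; each statement's English description precedes it below -/
import Mathlib

section
/- Let M be a loopless matroid on a finite nonempty ground set E, and let ℓ* be the ideal relative loads arising from any Φ-decomposition of M. Then 1 / (min_{e∈E} ℓ*(e)) = max over all nonempty A ⊆ E of |A| / rk(A); that is, the reciprocal of the minimum ideal relative load equals the fractional covering number β_M of M. -/
open Set Matroid

variable {α : Type*}

/-- The rank of a set `A` in a matroid `M`: the size of a largest independent subset of `A`. -/
noncomputable def mrk (M : Matroid α) (A : Set α) : ℕ :=
  sSup {n : ℕ | ∃ I, M.Indep I ∧ I ⊆ A ∧ I.ncard = n}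

/-- The total weight of a set of elements. -/
noncomputable def wSum (w : α → ℝ) (S : Set α) : ℝ := ∑ᶠ e ∈ S, w e

/-- `B` is a minimum-weight base of `M` with respect to the weights `w`. -/
def IsMinWeightBase (M : Matroid α) (w : α → ℝ) (B : Set α) : Prop :=
  M.IsBase B ∧ ∀ B', M.IsBase B' → wSum w B ≤ wSum w B'

/-- A circuit: an inclusion-wise minimal dependent set. -/
def IsCircuit (M : Matroid α) (C : Set α) : Prop :=
  C ⊆ M.E ∧ ¬ M.Indep C ∧ ∀ x ∈ C, M.Indep (C \ {x})

/-- The fractional base packing number `Φ_M`. -/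
noncomputable def PhiM (M : Matroid α) : ℝ :=
  sInf {x : ℝ | ∃ A ⊆ M.E, mrk M (M.E \ A) < mrk M M.E ∧
    x = (A.ncard : ℝ) / ((mrk M M.E : ℝ) - (mrk M (M.E \ A) : ℝ))}

/-- `A` attains the fractional packing number of `M`. -/
def AttainsPhi (M : Matroid α) (A : Set α) : Prop :=
  A ⊆ M.E ∧ mrk M (M.E \ A) < mrk M M.E ∧
    (A.ncard : ℝ) / ((mrk M M.E : ℝ) - (mrk M (M.E \ A) : ℝ)) = PhiM M

/-- The fractional base covering number `β_M`. -/
noncomputable def BetaM (M : Matroid α) : ℝ :=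
  sSup {x : ℝ | ∃ A ⊆ M.E, A.Nonempty ∧ x = (A.ncard : ℝ) / (mrk M A : ℝ)}

/-- The relative load of an element `e` in a base collection `Bs` of size `k`. -/
noncomputable def relLoad {k : ℕ} (Bs : Fin k → Set α) (e : α) : ℝ :=
  (({i | e ∈ Bs i} : Set (Fin k)).ncard : ℝ) / (k : ℝ)

/-! ### Auxiliary lemmas about `mrk` -/

lemma indep_finite {M : Matroid α} (hfin : M.E.Finite) {I : Set α} (hI : M.Indep I) :
    I.Finite := hfin.subset hI.subset_ground

lemma mrk_bdd {M : Matroid α} (hfin : M.E.Finite) (A : Set α) :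
    BddAbove {n : ℕ | ∃ I, M.Indep I ∧ I ⊆ A ∧ I.ncard = n} := by
  refine ⟨M.E.ncard, fun n hn => ?_⟩
  obtain ⟨I, hI, -, rfl⟩ := hn
  exact Set.ncard_le_ncard hI.subset_ground hfin

lemma ncard_le_mrk {M : Matroid α} (hfin : M.E.Finite) {I A : Set α}
    (hI : M.Indep I) (hIA : I ⊆ A) : I.ncard ≤ mrk M A :=
  le_csSup (mrk_bdd hfin A) ⟨I, hI, hIA, rfl⟩

lemma basis'_mrk {M : Matroid α} (hfin : M.E.Finite) {I A : Set α}
    (hI : M.IsBasis' I A) : mrk M A = I.ncard := by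
  refine le_antisymm (csSup_le ⟨0, ∅, M.empty_indep, empty_subset _, by simp⟩ ?_)
      (ncard_le_mrk hfin hI.indep hI.subset)
  rintro n ⟨J, hJ, hJA, rfl⟩
  by_contra hlt
  push_neg at hlt
  have hIf := indep_finite hfin hI.indep
  have hJf := indep_finite hfin hJ
  have hcard : I.encard < J.encard := by
    rwa [← Set.Finite.cast_ncard_eq hIf, ← Set.Finite.cast_ncard_eq hJf, Nat.cast_lt]
  obtain ⟨x, hx, hxI⟩ := hI.indep.augment hJ hcard
  exact hI.insert_not_indep ⟨hJA hx.1, hx.2⟩ hxI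

lemma mrk_mono {M : Matroid α} (hfin : M.E.Finite) {A B : Set α} (hAB : A ⊆ B) :
    mrk M A ≤ mrk M B := by
  obtain ⟨I, hI⟩ := M.exists_isBasis' A
  rw [basis'_mrk hfin hI]
  exact ncard_le_mrk hfin hI.indep (hI.subset.trans hAB)

lemma mrk_empty (M : Matroid α) : mrk M (∅ : Set α) = 0 := by
  have h : {n : ℕ | ∃ I, M.Indep I ∧ I ⊆ (∅ : Set α) ∧ I.ncard = n} = {0} := by
    ext n
    constructor
    · rintro ⟨I, -, hI, rfl⟩
      simp [subset_empty_iff.1 hI]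
    · rintro rfl
      exact ⟨∅, M.empty_indep, by simp⟩
  rw [mrk, h, csSup_singleton]

lemma one_le_mrk {M : Matroid α} (hfin : M.E.Finite) {e : α} {A : Set α}
    (he : e ∈ A) (hind : M.Indep {e}) : 1 ≤ mrk M A := by
  have := ncard_le_mrk hfin hind (singleton_subset_iff.2 he)
  simpa using this

lemma mrk_submod {M : Matroid α} (hfin : M.E.Finite) (X Y : Set α) :
    mrk M (X ∪ Y) + mrk M (X ∩ Y) ≤ mrk M X + mrk M Y := by
  obtain ⟨I, hI⟩ := M.exists_isBasis' (X ∩ Y)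
  obtain ⟨J, hJ, hIJ⟩ := hI.indep.subset_isBasis'_of_subset
    (hI.subset.trans (inter_subset_left.trans subset_union_left))
  have hJf := indep_finite hfin hJ.indep
  have hJXY : J ∩ (X ∩ Y) = I := by
    refine (hI.eq_of_subset_indep (hJ.indep.subset inter_subset_left)
      (subset_inter hIJ hI.subset) inter_subset_right).symm
  have h1 : (J ∩ X).ncard + (J ∩ Y).ncard = J.ncard + I.ncard := by
    have hu : (J ∩ X) ∪ (J ∩ Y) = J := by
      rw [← inter_union_distrib_left, inter_eq_self_of_subset_left hJ.subset]
    have hi : (J ∩ X) ∩ (J ∩ Y) = I := by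
      rw [← hJXY]; ext x; simp; tauto
    have := Set.ncard_union_add_ncard_inter (J ∩ X) (J ∩ Y)
      (hJf.subset inter_subset_left) (hJf.subset inter_subset_left)
    rw [hu, hi] at this
    omega
  rw [basis'_mrk hfin hJ, basis'_mrk hfin hI, ← h1]
  exact add_le_add (ncard_le_mrk hfin (hJ.indep.subset inter_subset_left) inter_subset_right)
    (ncard_le_mrk hfin (hJ.indep.subset inter_subset_left) inter_subset_right)

lemma mrk_diminish {M : Matroid α} (hfin : M.E.Finite) {A B : Set α} (T : Set α)
    (hBA : B ⊆ A) : mrk M (A ∪ T) + mrk M B ≤ mrk M A + mrk M (B ∪ T) := by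
  have h := mrk_submod hfin A (B ∪ T)
  have h1 : A ∪ (B ∪ T) = A ∪ T := by
    rw [← union_assoc, union_eq_self_of_subset_right hBA]
  have h2 : B ⊆ A ∩ (B ∪ T) := subset_inter hBA subset_union_left
  rw [h1] at h
  have := mrk_mono hfin (M := M) h2
  omega

lemma mrk_restrict (M : Matroid α) (R A : Set α) :
    mrk (M ↾ R) A = mrk M (A ∩ R) := by
  unfold mrk
  congr 1
  ext n
  constructor
  · rintro ⟨I, hI, hIA, rfl⟩
    rw [restrict_indep_iff] at hI
    exact ⟨I, hI.1, subset_inter hIA hI.2, rfl⟩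
  · rintro ⟨I, hI, hIA, rfl⟩
    exact ⟨I, restrict_indep_iff.2 ⟨hI, hIA.trans inter_subset_right⟩,
      hIA.trans inter_subset_left, rfl⟩

/-! ### Auxiliary lemmas about `PhiM` and `BetaM` -/

section Phi
variable {N : Matroid α}

lemma phiSet_finite (hfin : N.E.Finite) :
    {x : ℝ | ∃ A ⊆ N.E, mrk N (N.E \ A) < mrk N N.E ∧
      x = (A.ncard : ℝ) / ((mrk N N.E : ℝ) - (mrk N (N.E \ A) : ℝ))}.Finite := by
  apply Set.Finite.subset (Set.Finite.image
    (f := fun A => (A.ncard : ℝ) / ((mrk N N.E : ℝ) - (mrk N (N.E \ A) : ℝ)))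
    hfin.finite_subsets)
  rintro x ⟨A, hA, -, rfl⟩
  exact ⟨A, hA, rfl⟩

lemma phiSet_pos (hfin : N.E.Finite) {x : ℝ}
    (hx : x ∈ {x : ℝ | ∃ A ⊆ N.E, mrk N (N.E \ A) < mrk N N.E ∧
      x = (A.ncard : ℝ) / ((mrk N N.E : ℝ) - (mrk N (N.E \ A) : ℝ))}) : 0 < x := by
  obtain ⟨A, hA, hdrop, rfl⟩ := hx
  have hAne : A.Nonempty := by
    rcases A.eq_empty_or_nonempty with rfl | h
    · simp at hdrop
    · exact h
  have h1 : (0 : ℝ) < A.ncard := by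
    have := Set.ncard_pos (hfin.subset hA) |>.2 hAne
    exact_mod_cast this
  have h2 : (0 : ℝ) < (mrk N N.E : ℝ) - (mrk N (N.E \ A) : ℝ) := by
    have h3 : (mrk N (N.E \ A) : ℝ) < mrk N N.E := by exact_mod_cast hdrop
    linarith
  exact div_pos h1 h2

lemma phiSet_nonempty (h1 : 0 < mrk N N.E) :
    {x : ℝ | ∃ A ⊆ N.E, mrk N (N.E \ A) < mrk N N.E ∧
      x = (A.ncard : ℝ) / ((mrk N N.E : ℝ) - (mrk N (N.E \ A) : ℝ))}.Nonempty := by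
  refine ⟨_, N.E, Subset.rfl, ?_, rfl⟩
  rw [diff_self, mrk_empty]
  exact h1

lemma phiM_mem (hfin : N.E.Finite) (h1 : 0 < mrk N N.E) :
    PhiM N ∈ {x : ℝ | ∃ A ⊆ N.E, mrk N (N.E \ A) < mrk N N.E ∧
      x = (A.ncard : ℝ) / ((mrk N N.E : ℝ) - (mrk N (N.E \ A) : ℝ))} :=
  Set.Nonempty.csInf_mem (phiSet_nonempty h1) (phiSet_finite hfin)

lemma phiM_pos (hfin : N.E.Finite) (h1 : 0 < mrk N N.E) : 0 < PhiM N :=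
  phiSet_pos hfin (phiM_mem hfin h1)

lemma phiM_le (hfin : N.E.Finite) {A : Set α} (hA : A ⊆ N.E)
    (hdrop : mrk N (N.E \ A) < mrk N N.E) :
    PhiM N ≤ (A.ncard : ℝ) / ((mrk N N.E : ℝ) - (mrk N (N.E \ A) : ℝ)) :=
  csInf_le (phiSet_finite hfin).bddBelow ⟨A, hA, hdrop, rfl⟩

lemma phi_mul_le (hfin : N.E.Finite) {A : Set α} (hA : A ⊆ N.E) :
    PhiM N * ((mrk N N.E : ℝ) - (mrk N (N.E \ A) : ℝ)) ≤ (A.ncard : ℝ) := by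
  by_cases hdrop : mrk N (N.E \ A) < mrk N N.E
  · have hd : (0 : ℝ) < (mrk N N.E : ℝ) - (mrk N (N.E \ A) : ℝ) := by
      have h3 : (mrk N (N.E \ A) : ℝ) < mrk N N.E := by exact_mod_cast hdrop
      linarith
    have h4 := phiM_le hfin hA hdrop
    calc PhiM N * ((mrk N N.E : ℝ) - (mrk N (N.E \ A) : ℝ))
        ≤ ((A.ncard : ℝ) / ((mrk N N.E : ℝ) - (mrk N (N.E \ A) : ℝ))) *
          ((mrk N N.E : ℝ) - (mrk N (N.E \ A) : ℝ)) :=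
          mul_le_mul_of_nonneg_right h4 hd.le
      _ = (A.ncard : ℝ) := div_mul_cancel₀ _ hd.ne'
  · push_neg at hdrop
    have hle : mrk N (N.E \ A) ≤ mrk N N.E := mrk_mono hfin diff_subset
    have heq : mrk N (N.E \ A) = mrk N N.E := le_antisymm hle hdrop
    rw [heq]
    simp

end Phi

lemma betaSet_finite {M : Matroid α} (hfin : M.E.Finite) :
    {x : ℝ | ∃ A ⊆ M.E, A.Nonempty ∧ x = (A.ncard : ℝ) / (mrk M A : ℝ)}.Finite := by
  apply Set.Finite.subset (Set.Finite.image
    (f := fun A => (A.ncard : ℝ) / (mrk M A : ℝ)) hfin.finite_subsets)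
  rintro x ⟨A, hA, -, rfl⟩
  exact ⟨A, hA, rfl⟩

lemma betaSet_nonempty {M : Matroid α} (hne : M.E.Nonempty) :
    {x : ℝ | ∃ A ⊆ M.E, A.Nonempty ∧ x = (A.ncard : ℝ) / (mrk M A : ℝ)}.Nonempty :=
  ⟨_, M.E, Subset.rfl, hne, rfl⟩

/-- The reciprocal of the minimum ideal relative load (arising from any Φ-decomposition)
equals the fractional covering number `β_M`. -/
theorem stmt_8 (M : Matroid α) (hfin : M.E.Finite) (hne : M.E.Nonempty)
    (hloopless : ∀ e ∈ M.E, M.Indep {e})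
    (k : ℕ) (Es : ℕ → Set α) (h0 : Es 0 = M.E) (hk : Es k = ∅)
    (hss : ∀ i < k, Es (i + 1) ⊂ Es i)
    (hatt : ∀ i < k, AttainsPhi (M ↾ Es i) (Es i \ Es (i + 1)))
    (lstar : α → ℝ)
    (hl : ∀ i < k, ∀ e ∈ Es i \ Es (i + 1), lstar e = 1 / PhiM (M ↾ Es i)) :
    1 / sInf (lstar '' M.E) = BetaM M := by
  classical
  set Φ : ℕ → ℝ := fun i => PhiM (M ↾ Es i) with hΦdef
  have hsub : ∀ i < k, Es (i + 1) ⊆ Es i := fun i hi => (hss i hi).subset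
  have hchain : ∀ i, i ≤ k → Es i ⊆ M.E := by
    intro i
    induction i with
    | zero => intro _; rw [h0]
    | succ n ih => intro hn; exact (hsub n (by omega)).trans (ih (by omega))
  have hDne : ∀ i < k, (Es i \ Es (i + 1)).Nonempty := by
    intro i hi
    obtain ⟨x, hx1, hx2⟩ := exists_of_ssubset (hss i hi)
    exact ⟨x, hx1, hx2⟩
  have hEfin : ∀ i, i ≤ k → (Es i).Finite := fun i hi => hfin.subset (hchain i hi)
  have hrEi : ∀ i < k, 0 < mrk M (Es i) := by
    intro i hi
    obtain ⟨e, he⟩ := hDne i hi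
    exact one_le_mrk hfin he.1 (hloopless e (hchain i hi.le he.1))
  -- translation of restriction facts
  have hresE : ∀ i, (M ↾ Es i).E = Es i := fun _ => rfl
  have hres : ∀ i (X : Set α), X ⊆ Es i → mrk (M ↾ Es i) X = mrk M X := by
    intro i X hX
    rw [mrk_restrict, inter_eq_self_of_subset_left hX]
  have hresfin : ∀ i, i ≤ k → (M ↾ Es i).E.Finite := fun i hi => hEfin i hi
  have hresrk : ∀ i < k, 0 < mrk (M ↾ Es i) (M ↾ Es i).E := by
    intro i hi
    rw [hresE, hres i _ Subset.rfl]
    exact hrEi i hi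
  have hΦpos : ∀ i < k, 0 < Φ i := fun i hi =>
    phiM_pos (hresfin i hi.le) (hresrk i hi)
  -- general inequality |A| ≥ Φᵢ (r(Esᵢ) − r(Esᵢ \ A)) for A ⊆ Esᵢ
  have hphi_mul : ∀ i < k, ∀ A, A ⊆ Es i →
      Φ i * ((mrk M (Es i) : ℝ) - (mrk M (Es i \ A) : ℝ)) ≤ (A.ncard : ℝ) := by
    intro i hi A hA
    have := phi_mul_le (N := M ↾ Es i) (hresfin i hi.le) (A := A) (by rw [hresE]; exact hA)
    rwa [hresE, hres i _ Subset.rfl, hres i _ diff_subset] at this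
  -- Φᵢ ≤ |Esᵢ| / r(Esᵢ)
  have hΦle : ∀ i < k, Φ i ≤ ((Es i).ncard : ℝ) / (mrk M (Es i) : ℝ) := by
    intro i hi
    have h := phiM_le (N := M ↾ Es i) (hresfin i hi.le) (A := (M ↾ Es i).E) Subset.rfl
      (by rw [diff_self, mrk_empty]; exact hresrk i hi)
    rw [hresE, diff_self] at h
    rw [mrk_restrict] at h
    simp only [Set.empty_inter, mrk_empty, Nat.cast_zero, sub_zero] at h
    rwa [inter_self] at h
  -- the attaining set gives an exact identity
  have hdrop : ∀ i < k, mrk M (Es (i + 1)) < mrk M (Es i) := by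
    intro i hi
    have h := (hatt i hi).2.1
    rw [hresE] at h
    have hset : Es i \ (Es i \ Es (i + 1)) = Es (i + 1) := by
      rw [diff_diff_right_self, inter_eq_self_of_subset_right (hsub i hi)]
    rwa [hset, hres i _ (hsub i hi), hres i _ Subset.rfl] at h
  have hDcard : ∀ i < k, ((Es i \ Es (i + 1)).ncard : ℝ) =
      Φ i * ((mrk M (Es i) : ℝ) - (mrk M (Es (i + 1)) : ℝ)) := by
    intro i hi
    have h := (hatt i hi).2.2
    rw [hresE] at h
    have hset : Es i \ (Es i \ Es (i + 1)) = Es (i + 1) := by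
      rw [diff_diff_right_self, inter_eq_self_of_subset_right (hsub i hi)]
    rw [hset, hres i _ (hsub i hi), hres i _ Subset.rfl] at h
    have hd : (0 : ℝ) < (mrk M (Es i) : ℝ) - (mrk M (Es (i + 1)) : ℝ) := by
      have := hdrop i hi
      have h3 : (mrk M (Es (i + 1)) : ℝ) < (mrk M (Es i) : ℝ) := by exact_mod_cast this
      linarith
    rw [div_eq_iff hd.ne'] at h
    exact h
  -- the per-layer inequality
  have hlayer : ∀ i < k, ∀ S, S ⊆ M.E →
      ((S ∩ (Es i \ Es (i + 1))).ncard : ℝ) ≤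
        Φ i * ((mrk M (S ∩ Es i) : ℝ) - (mrk M (S ∩ Es (i + 1)) : ℝ)) := by
    intro i hi S hS
    set D := Es i \ Es (i + 1) with hD
    set T := S ∩ D with hT
    have hstep := hphi_mul i hi (D \ S) (diff_subset.trans diff_subset)
    have hset : Es i \ (D \ S) = Es (i + 1) ∪ T := by
      apply Subset.antisymm
      · rintro x ⟨hxi, hx⟩
        by_cases h1 : x ∈ Es (i + 1)
        · exact Or.inl h1
        · by_cases h2 : x ∈ S
          · exact Or.inr ⟨h2, hxi, h1⟩
          · exact absurd ⟨⟨hxi, h1⟩, h2⟩ hx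
      · rintro x (h1 | ⟨h2, hxi, h1⟩)
        · exact ⟨hsub i hi h1, fun hDx => hDx.1.2 h1⟩
        · exact ⟨hxi, fun hDx => hDx.2 h2⟩
    have hfinD : D.Finite := (hEfin i hi.le).subset diff_subset
    have hcard : ((D \ S).ncard : ℝ) = (D.ncard : ℝ) - (T.ncard : ℝ) := by
      have hds : D \ S = D \ T := by ext x; simp only [hT, Set.mem_diff, Set.mem_inter_iff]; tauto
      rw [hds, Set.cast_ncard_sdiff inter_subset_right hfinD]
    rw [hset, hcard, hDcard i hi] at hstep
    -- hstep : Φ i * (r(Es i) − r(Es(i+1) ∪ T)) ≤ Φ i * (r Es i − r Es(i+1)) − |T|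
    have hdim := mrk_diminish (M := M) hfin T (inter_subset_right : S ∩ Es (i + 1) ⊆ Es (i + 1))
    have hST : (S ∩ Es (i + 1)) ∪ T = S ∩ Es i := by
      rw [hT, hD, ← inter_union_distrib_left, union_diff_cancel (hsub i hi)]
    rw [hST] at hdim
    have hdimR : (mrk M (Es (i + 1) ∪ T) : ℝ) + (mrk M (S ∩ Es (i + 1)) : ℝ) ≤
        (mrk M (Es (i + 1)) : ℝ) + (mrk M (S ∩ Es i) : ℝ) := by exact_mod_cast hdim
    have hpos := (hΦpos i hi).le
    nlinarith [hstep, hdimR, hpos]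
  -- the index attaining the maximum Φ
  have hk0 : 0 < k := by
    rcases Nat.eq_zero_or_pos k with rfl | h
    · rw [hk] at h0; exact absurd h0.symm (Set.nonempty_iff_ne_empty.1 hne)
    · exact h
  obtain ⟨i₀, hi₀mem, hmax⟩ := Finset.exists_max_image (Finset.range k) Φ
    ⟨0, Finset.mem_range.2 hk0⟩
  have hi₀ : i₀ < k := Finset.mem_range.1 hi₀mem
  -- global bound |S| ≤ Φ i₀ · r S for all S ⊆ E
  have hglobal : ∀ S, S ⊆ M.E → (S.ncard : ℝ) ≤ Φ i₀ * (mrk M S : ℝ) := by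
    intro S hS
    set g : ℕ → ℝ := fun j => ((S ∩ Es j).ncard : ℝ) - Φ i₀ * (mrk M (S ∩ Es j) : ℝ) with hg
    have hstep : ∀ j < k, g j ≤ g (j + 1) := by
      intro j hj
      have hL := hlayer j hj S hS
      have hsplit : (S ∩ Es j).ncard =
          (S ∩ (Es j \ Es (j + 1))).ncard + (S ∩ Es (j + 1)).ncard := by
        have hu : (S ∩ (Es j \ Es (j + 1))) ∪ (S ∩ Es (j + 1)) = S ∩ Es j := by
          rw [← inter_union_distrib_left, diff_union_of_subset (hsub j hj)]
        have hdisj : Disjoint (S ∩ (Es j \ Es (j + 1))) (S ∩ Es (j + 1)) :=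
          Set.disjoint_of_subset inter_subset_right inter_subset_right disjoint_sdiff_left
        rw [← hu, Set.ncard_union_eq hdisj
          (((hEfin j hj.le).subset diff_subset).subset inter_subset_right)
          ((hEfin (j + 1) hj).subset inter_subset_right)]
      have hmono : mrk M (S ∩ Es (j + 1)) ≤ mrk M (S ∩ Es j) :=
        mrk_mono hfin (inter_subset_inter_right _ (hsub j hj))
      have hmonoR : (mrk M (S ∩ Es (j + 1)) : ℝ) ≤ (mrk M (S ∩ Es j) : ℝ) := by
        exact_mod_cast hmono
      have hΦj : Φ j ≤ Φ i₀ := hmax j (Finset.mem_range.2 hj)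
      have hsplitR : ((S ∩ Es j).ncard : ℝ) =
          ((S ∩ (Es j \ Es (j + 1))).ncard : ℝ) + ((S ∩ Es (j + 1)).ncard : ℝ) := by
        exact_mod_cast hsplit
      simp only [hg]
      nlinarith [hL, hΦj, hmonoR, hsplitR]
    have hle : ∀ m, ∀ j, j ≤ k → k - j ≤ m → g j ≤ 0 := by
      intro m
      induction m with
      | zero =>
        intro j hj hm
        have : j = k := by omega
        subst this
        simp [hg, hk, mrk_empty]
      | succ n ih =>
        intro j hj hm
        rcases eq_or_lt_of_le hj with rfl | hjk
        · simp [hg, hk, mrk_empty]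
        · exact (hstep j hjk).trans (ih (j + 1) (by omega) (by omega))
    have h0' : g 0 ≤ 0 := hle k 0 (by omega) (by omega)
    simp only [hg, h0, inter_eq_self_of_subset_left hS] at h0'
    linarith
  -- β ≤ Φ i₀
  have hβleΦ : BetaM M ≤ Φ i₀ := by
    refine csSup_le (betaSet_nonempty hne) ?_
    rintro x ⟨A, hA, hAne, rfl⟩
    obtain ⟨e, he⟩ := hAne
    have hr1 : 1 ≤ mrk M A := one_le_mrk hfin he (hloopless e (hA he))
    have hrpos : (0 : ℝ) < (mrk M A : ℝ) := by exact_mod_cast hr1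
    rw [div_le_iff₀ hrpos]
    exact hglobal A hA
  -- Φ i ≤ β for every i < k
  have hΦleβ : ∀ i < k, Φ i ≤ BetaM M := by
    intro i hi
    refine (hΦle i hi).trans (le_csSup (betaSet_finite hfin).bddAbove ?_)
    exact ⟨Es i, hchain i hi.le, (hDne i hi).mono (diff_subset), rfl⟩
  have hβeq : Φ i₀ = BetaM M := le_antisymm (hΦleβ i₀ hi₀) hβleΦ
  have hβpos : 0 < BetaM M := hβeq ▸ hΦpos i₀ hi₀
  -- locating each element in a layer
  have hloc : ∀ e ∈ M.E, ∃ i, i < k ∧ e ∈ Es i \ Es (i + 1) := by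
    intro e he
    have hex : ∃ j, e ∉ Es j := ⟨k, by rw [hk]; exact notMem_empty e⟩
    have hj : e ∉ Es (Nat.find hex) := Nat.find_spec hex
    have hj0 : Nat.find hex ≠ 0 := by
      intro h
      rw [h, h0] at hj
      exact hj he
    have hjk : Nat.find hex ≤ k := Nat.find_le (by rw [hk]; exact notMem_empty e)
    refine ⟨Nat.find hex - 1, by omega, ?_, ?_⟩
    · by_contra hmem
      exact (Nat.find_min hex (by omega)) hmem
    · have : Nat.find hex - 1 + 1 = Nat.find hex := by omega
      rw [this]
      exact hj
  -- lower bound on all loads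
  have hlb : ∀ x ∈ lstar '' M.E, 1 / BetaM M ≤ x := by
    rintro x ⟨e, he, rfl⟩
    obtain ⟨i, hi, hei⟩ := hloc e he
    rw [hl i hi e hei]
    exact one_div_le_one_div_of_le (hΦpos i hi) (hΦleβ i hi)
  -- an element attaining the minimum
  obtain ⟨e₀, he₀⟩ := hDne i₀ hi₀
  have he₀E : e₀ ∈ M.E := hchain i₀ hi₀.le he₀.1
  have he₀val : lstar e₀ = 1 / BetaM M := by
    rw [hl i₀ hi₀ e₀ he₀, show PhiM (M ↾ Es i₀) = BetaM M from hβeq]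
  have hmem : (1 : ℝ) / BetaM M ∈ lstar '' M.E := ⟨e₀, he₀E, he₀val⟩
  have hinf : sInf (lstar '' M.E) = 1 / BetaM M :=
    le_antisymm (csInf_le ⟨1 / BetaM M, hlb⟩ hmem) (le_csInf ⟨_, hmem⟩ hlb)
  rw [hinf, one_div_one_div]
end

section
/- Let M be a matroid on a finite ground set E, let w : E → ℝ be a weight function, let B be a minimum-weight base of M with respect to w, and let A ⊆ E. Then there exists a minimum-weight base B_A of the restriction M|A (with respect to w restricted to A) such that B ∩ A ⊆ B_A. -/
open Set Matroid

variable {α : Type*}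

lemma wSum_insert (w : α → ℝ) {S : Set α} (hS : S.Finite) {x : α} (hx : x ∉ S) :
    wSum w (insert x S) = w x + wSum w S := finsum_mem_insert w hx hS

lemma wSum_diff (w : α → ℝ) {S : Set α} (hS : S.Finite) {x : α} (hx : x ∈ S) :
    wSum w S = w x + wSum w (S \ {x}) := by
  nth_rewrite 1 [← Set.insert_eq_of_mem hx, ← Set.insert_diff_singleton]
  exact wSum_insert w (hS.diff) (fun h => h.2 rfl)

/-- For any minimum-weight base `B` of `M` and any `A ⊆ E` there is a minimum-weight base
`B_A` of the restriction `M|A` containing `B ∩ A`. -/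
theorem stmt_14 (M : Matroid α) (hfin : M.E.Finite) (w : α → ℝ)
    (B : Set α) (hB : IsMinWeightBase M w B) (A : Set α) (hA : A ⊆ M.E) :
    ∃ BA, IsMinWeightBase (M ↾ A) w BA ∧ B ∩ A ⊆ BA := by
  obtain ⟨hBbase, hBmin⟩ := hB
  have hAfin : A.Finite := hfin.subset hA
  set N := M ↾ A with hN
  have hbfin : {X | N.IsBase X}.Finite :=
    hAfin.finite_subsets.subset (fun X (hX : N.IsBase X) => hX.subset_ground)
  obtain ⟨X₀, hX₀⟩ := N.exists_isBase
  obtain ⟨X₁, hX₁, hX₁min⟩ := Set.exists_min_image _ (wSum w) hbfin ⟨X₀, hX₀⟩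
  set T := {X | N.IsBase X ∧ wSum w X ≤ wSum w X₁} with hT
  have hTfin : T.Finite := hbfin.subset (fun X hX => hX.1)
  obtain ⟨BA, hBAT, hBAmax⟩ :=
    Set.exists_max_image T (fun X => (X ∩ B).ncard) hTfin ⟨X₁, hX₁, le_refl _⟩
  obtain ⟨hBA, hBAw⟩ := hBAT
  refine ⟨BA, ⟨hBA, fun B' hB' => le_trans hBAw (hX₁min B' hB')⟩, ?_⟩
  by_contra hcon
  obtain ⟨e, ⟨heB, heA⟩, heBA⟩ := not_subset.1 hcon
  have hBAind : M.Indep BA := hBA.indep.of_restrict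
  have hBAfin : BA.Finite := hAfin.subset hBA.subset_ground
  have hBfin : B.Finite := hfin.subset hBbase.subset_ground
  have heE : e ∈ M.E := hA heA
  have hdep : ¬ M.Indep (insert e BA) := by
    intro h
    exact (hBA.insert_dep ⟨heA, heBA⟩).not_indep
      (h.indep_restrict_of_subset (insert_subset heA hBA.subset_ground))
  have hecl : e ∈ M.closure BA := by
    rw [hBAind.mem_closure_iff_of_notMem heBA]
    exact ⟨hdep, insert_subset heE (hBA.subset_ground.trans hA)⟩
  set P := {n | ∃ I, I ⊆ BA ∧ e ∈ M.closure I ∧ I.ncard = n} with hP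
  have hPne : (BA.ncard) ∈ P := ⟨BA, Subset.rfl, hecl, rfl⟩
  obtain ⟨I, hIBA, heI, hIcard⟩ := Nat.sInf_mem ⟨_, hPne⟩
  have hIfin : I.Finite := hBAfin.subset hIBA
  have hImin : ∀ f ∈ I, e ∉ M.closure (I \ {f}) := by
    intro f hf hcl
    have hmem : (I \ {f}).ncard ∈ P := ⟨_, diff_subset.trans hIBA, hcl, rfl⟩
    have hlt : (I \ {f}).ncard < I.ncard := Set.ncard_diff_singleton_lt_of_mem hf hIfin
    have := Nat.sInf_le hmem
    omega
  have heBcl : e ∉ M.closure (B \ {e}) := hBbase.indep.notMem_closure_sdiff_of_mem heB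
  have hex : ∃ f ∈ I, f ∉ M.closure (B \ {e}) := by
    by_contra h
    push_neg at h
    exact heBcl (M.closure_subset_closure_of_subset_closure h heI)
  obtain ⟨f, hfI, hfcl⟩ := hex
  have hfBA : f ∈ BA := hIBA hfI
  have hfE : f ∈ M.E := hA (hBA.subset_ground hfBA)
  have hfe : f ≠ e := fun h => heBA (h ▸ hfBA)
  have hfB : f ∉ B := fun h =>
    hfcl (M.subset_closure (B \ {e}) (diff_subset.trans hBbase.subset_ground) ⟨h, hfe⟩)
  have hkey : e ∉ M.closure (BA \ {f}) := by
    intro hecl'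
    have h1 : e ∈ M.closure (insert f (I \ {f})) \ M.closure (I \ {f}) := by
      rw [insert_diff_singleton, insert_eq_of_mem hfI]
      exact ⟨heI, hImin f hfI⟩
    have h2 := Matroid.closure_exchange h1
    have h3 : insert e (I \ {f}) ⊆ M.closure (BA \ {f}) :=
      insert_subset hecl' ((diff_subset_diff_left hIBA).trans
        (M.subset_closure _ (diff_subset.trans (hBA.subset_ground.trans hA))))
    have h4 : f ∈ M.closure (BA \ {f}) :=
      M.closure_subset_closure_of_subset_closure h3 h2.1
    exact hBAind.notMem_closure_sdiff_of_mem hfBA h4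
  have hBA'ind : M.Indep (insert e (BA \ {f})) := by
    rw [(hBAind.subset diff_subset).insert_indep_iff_of_notMem (fun h => heBA h.1)]
    exact ⟨heE, hkey⟩
  have hBA'base : N.IsBase (insert e (BA \ {f})) :=
    hBA.exchange_isBase_of_indep heBA
      (hBA'ind.indep_restrict_of_subset
        (insert_subset heA ((diff_subset).trans hBA.subset_ground)))
  have hB'ind : M.Indep (insert f (B \ {e})) := by
    rw [(hBbase.indep.subset diff_subset).insert_indep_iff_of_notMem (fun h => hfB h.1)]
    exact ⟨hfE, hfcl⟩
  have hB'base : M.IsBase (insert f (B \ {e})) := hBbase.exchange_isBase_of_indep hfB hB'ind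
  have hwB' := hBmin _ hB'base
  rw [wSum_insert w (hBfin.diff) (fun h => hfB h.1), wSum_diff w hBfin heB] at hwB'
  have hwef : w e ≤ w f := by linarith
  have hwBA' : wSum w (insert e (BA \ {f})) ≤ wSum w BA := by
    rw [wSum_insert w (hBAfin.diff) (fun h => heBA h.1), wSum_diff w hBAfin hfBA]
    linarith
  have hBA'T : insert e (BA \ {f}) ∈ T := ⟨hBA'base, hwBA'.trans hBAw⟩
  have hset : (insert e (BA \ {f})) ∩ B = insert e (BA ∩ B) := by
    ext x
    simp only [mem_inter_iff, mem_insert_iff, mem_diff, mem_singleton_iff]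
    constructor
    · rintro ⟨(rfl | ⟨hx, hxf⟩), hxB⟩
      · exact Or.inl rfl
      · exact Or.inr ⟨hx, hxB⟩
    · rintro (rfl | ⟨hx, hxB⟩)
      · exact ⟨Or.inl rfl, heB⟩
      · exact ⟨Or.inr ⟨hx, fun h => hfB (h ▸ hxB)⟩, hxB⟩
  have hle := hBAmax _ hBA'T
  simp only [hset] at hle
  rw [Set.ncard_insert_of_notMem (fun h => heBA h.1) ((hBAfin.inter_of_left _))] at hle
  omega
end
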